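/- Let n ≥ 3 and let n = p1^{e1} ⋯ pk^{ek} be the prime factorization of n. Then the dihedral group D_{2n} of order 2n satisfies ι(D_{2n}) = k + 1 when n is not a power of 2, and ι(D_{2n}) = 2 when n is a power of 2. -/

import Mathlib

/-- The intersection number of a group: the minimum number of maximal subgroups
whose intersection equals the Frattini subgroup. -/
noncomputable def interNum (G : Type*) [Group G] : ℕ :=
  sInf {n | ∃ s : Finset (Subgroup G), s.card = n ∧ (∀ M ∈ s, IsCoatom M) ∧
    s.inf id = frattini G}

namespace InterNumDihedralAux
open AddSubgroup DihedralGroup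
variable {n : ℕ}

lemma int_mem_zmul_iff {g x : ℤ} : x ∈ zmultiples g ↔ g ∣ x := by
  rw [mem_zmultiples_iff]
  constructor
  · rintro ⟨k, rfl⟩; exact ⟨k, by simp [zsmul_eq_mul, mul_comm]⟩
  · rintro ⟨c, rfl⟩; exact ⟨c, by simp [zsmul_eq_mul, mul_comm]⟩

lemma mem_zmul_iff {g x : ZMod n} : x ∈ zmultiples g ↔ g ∣ x := by
  rw [mem_zmultiples_iff]
  constructor
  · rintro ⟨k, rfl⟩; exact ⟨k, by rw [zsmul_eq_mul, mul_comm]⟩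
  · rintro ⟨c, rfl⟩
    obtain ⟨k, rfl⟩ := ZMod.intCast_surjective c
    exact ⟨k, by rw [zsmul_eq_mul, mul_comm]⟩

lemma mem_zmul_natCast [NeZero n] {d : ℕ} (hd : d ∣ n) {x : ZMod n} :
    x ∈ zmultiples ((d : ZMod n)) ↔ d ∣ x.val := by
  rw [mem_zmul_iff]
  constructor
  · rintro ⟨c, rfl⟩
    rw [ZMod.val_mul, ZMod.val_natCast]
    exact (Nat.dvd_mod_iff hd).mpr (Dvd.dvd.mul_right ((Nat.dvd_mod_iff hd).mpr dvd_rfl) _)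
  · rintro ⟨c, hc⟩
    refine ⟨(c : ZMod n), ?_⟩
    have h1 : ((x.val : ℕ) : ZMod n) = x := ZMod.natCast_rightInverse x
    rw [← h1, hc]
    push_cast
    ring

lemma exists_zmul [NeZero n] (A : AddSubgroup (ZMod n)) :
    ∃ d : ℕ, d ∣ n ∧ A = zmultiples ((d : ZMod n)) := by
  obtain ⟨a, ha⟩ := Int.subgroup_cyclic (A.comap (Int.castAddHom (ZMod n)))
  rw [← zmultiples_eq_closure] at ha
  have key : ∀ x : ZMod n, x ∈ A ↔ (a : ZMod n) ∣ x := by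
    intro x
    constructor
    · intro hx
      obtain ⟨y, rfl⟩ := ZMod.intCast_surjective x
      have hy : y ∈ A.comap (Int.castAddHom (ZMod n)) := by simpa using hx
      rw [ha, int_mem_zmul_iff] at hy
      obtain ⟨k, rfl⟩ := hy
      exact ⟨(k : ZMod n), by push_cast; ring⟩
    · rintro ⟨c, rfl⟩
      obtain ⟨k, rfl⟩ := ZMod.intCast_surjective c
      have hm : a * k ∈ A.comap (Int.castAddHom (ZMod n)) := by
        rw [ha, int_mem_zmul_iff]; exact Dvd.intro _ rfl
      simpa using hm
  refine ⟨a.natAbs, ?_, ?_⟩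
  · have hn : (n : ℤ) ∈ A.comap (Int.castAddHom (ZMod n)) := by
      simp only [AddSubgroup.mem_comap, Int.coe_castAddHom, Int.cast_natCast,
        ZMod.natCast_self]
      exact A.zero_mem
    rw [ha, int_mem_zmul_iff] at hn
    exact Int.natAbs_dvd_natAbs.mpr hn |>.trans (by simp)
  · ext x
    rw [key x, mem_zmul_iff]
    rcases Int.natAbs_eq a with h | h
    · have h2 : ((a.natAbs : ℕ) : ZMod n) = (a : ZMod n) := by
        conv_rhs => rw [h]
        exact (Int.cast_natCast _).symm
      rw [h2]
    · have h2 : ((a.natAbs : ℕ) : ZMod n) = -(a : ZMod n) := by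
        conv_rhs => rw [h]
        rw [Int.cast_neg, Int.cast_natCast, neg_neg]
      rw [h2]
      exact (neg_dvd).symm

lemma zmul_one_top [NeZero n] : zmultiples (((1:ℕ) : ZMod n)) = ⊤ := by
  ext x; simp [mem_zmul_iff]

lemma zmul_ne_top [NeZero n] (hn : 2 ≤ n) {d : ℕ} (hd1 : d ≠ 1) (hd : d ∣ n) :
    zmultiples ((d : ZMod n)) ≠ ⊤ := by
  intro h
  have h1 : (1 : ZMod n) ∈ zmultiples ((d : ZMod n)) := h ▸ trivial
  rw [mem_zmul_natCast hd, ZMod.val_one_eq_one_mod, Nat.mod_eq_of_lt hn] at h1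
  exact hd1 (Nat.dvd_one.mp h1)

lemma isCoatom_zmul [NeZero n] (hn : 2 ≤ n) {p : ℕ} (hp : p.Prime) (hpn : p ∣ n) :
    IsCoatom (zmultiples ((p : ZMod n))) := by
  constructor
  · exact zmul_ne_top hn hp.ne_one hpn
  · intro B hB
    obtain ⟨e, he, rfl⟩ := exists_zmul B
    have hmem : (p : ZMod n) ∈ zmultiples ((e : ZMod n)) :=
      hB.le (mem_zmul_iff.mpr dvd_rfl)
    rw [mem_zmul_natCast he, ZMod.val_natCast] at hmem
    by_cases hpn' : p = n
    · subst hpn'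
      rcases (Nat.dvd_prime hp).mp he with rfl | rfl
      · exact zmul_one_top
      · exact absurd hB (lt_irrefl _)
    · have hplt : p < n := lt_of_le_of_ne (Nat.le_of_dvd (Nat.pos_of_ne_zero (NeZero.ne n)) hpn) hpn'
      rw [Nat.mod_eq_of_lt hplt] at hmem
      rcases (Nat.dvd_prime hp).mp hmem with rfl | rfl
      · exact zmul_one_top
      · exact absurd hB (lt_irrefl _)

lemma isCoatom_addsubgroup_iff [NeZero n] (hn : 2 ≤ n) (A : AddSubgroup (ZMod n)) :
    IsCoatom A ↔ ∃ p : ℕ, p.Prime ∧ p ∣ n ∧ A = zmultiples ((p : ZMod n)) := by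
  constructor
  · intro hA
    obtain ⟨d, hdn, rfl⟩ := exists_zmul A
    have hd1 : d ≠ 1 := by
      rintro rfl
      exact hA.1 zmul_one_top
    obtain ⟨p, hp, hpd⟩ := Nat.exists_prime_and_dvd hd1
    have hpn : p ∣ n := hpd.trans hdn
    have hle : zmultiples ((d : ZMod n)) ≤ zmultiples ((p : ZMod n)) := by
      intro x hx
      rw [mem_zmul_natCast hdn] at hx
      exact (mem_zmul_natCast hpn).mpr (hpd.trans hx)
    have heq : zmultiples ((d : ZMod n)) = zmultiples ((p : ZMod n)) := by
      by_contra hne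
      exact zmul_ne_top hn hp.ne_one hpn (hA.2 _ (lt_of_le_of_ne hle hne))
    exact ⟨p, hp, hpn, heq⟩
  · rintro ⟨p, hp, hpn, rfl⟩
    exact isCoatom_zmul hn hp hpn

section defs
def dmem (A : AddSubgroup (ZMod n)) (j : ZMod n) : DihedralGroup n → Prop
  | .r i => i ∈ A
  | .sr i => i - j ∈ A

def dsub (A : AddSubgroup (ZMod n)) (j : ZMod n) : Subgroup (DihedralGroup n) where
  carrier := {x | dmem A j x}
  one_mem' := A.zero_mem
  mul_mem' := by
    rintro (a | a) (b | b) ha hb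
    · exact A.add_mem ha hb
    · show b - a - j ∈ A
      rw [sub_right_comm]; exact A.sub_mem hb ha
    · show a + b - j ∈ A
      rw [← sub_add_eq_add_sub]; exact A.add_mem ha hb
    · show b - a ∈ A
      rw [← sub_sub_sub_cancel_right b a j]; exact A.sub_mem hb ha
  inv_mem' := by
    rintro (a | a) ha
    · exact A.neg_mem ha
    · exact ha

def rmem (A : AddSubgroup (ZMod n)) : DihedralGroup n → Prop
  | .r i => i ∈ A
  | .sr _ => False

def rsub (A : AddSubgroup (ZMod n)) : Subgroup (DihedralGroup n) where
  carrier := {x | rmem A x}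
  one_mem' := A.zero_mem
  mul_mem' := by
    rintro (a | a) (b | b) ha hb
    · exact A.add_mem ha hb
    · exact hb.elim
    · exact ha.elim
    · exact ha.elim
  inv_mem' := by
    rintro (a | a) ha
    · exact A.neg_mem ha
    · exact ha

@[simp] lemma r_mem_dsub {A : AddSubgroup (ZMod n)} {j i : ZMod n} :
    r i ∈ dsub A j ↔ i ∈ A := Iff.rfl
@[simp] lemma sr_mem_dsub {A : AddSubgroup (ZMod n)} {j i : ZMod n} :
    sr i ∈ dsub A j ↔ i - j ∈ A := Iff.rfl
@[simp] lemma r_mem_rsub {A : AddSubgroup (ZMod n)} {i : ZMod n} :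
    r i ∈ rsub A ↔ i ∈ A := Iff.rfl
@[simp] lemma sr_not_mem_rsub {A : AddSubgroup (ZMod n)} {i : ZMod n} :
    sr i ∉ rsub A := fun h => h

/-- the additive subgroup of rotation exponents of a subgroup -/
def rotExp (B : Subgroup (DihedralGroup n)) : AddSubgroup (ZMod n) where
  carrier := {i | r i ∈ B}
  zero_mem' := by show r 0 ∈ B; rw [← one_def]; exact B.one_mem
  add_mem' := by
    intro a b ha hb
    show r (a + b) ∈ B
    rw [← r_mul_r]; exact B.mul_mem ha hb
  neg_mem' := by
    intro a ha
    show r (-a) ∈ B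
    have : r (-a) = (r a)⁻¹ := rfl
    rw [this]; exact B.inv_mem ha

@[simp] lemma mem_rotExp {B : Subgroup (DihedralGroup n)} {i : ZMod n} :
    i ∈ rotExp B ↔ r i ∈ B := Iff.rfl
end defs

lemma sr_eq_r_mul_sr (x j : ZMod n) : sr x = r (j - x) * sr j := by
  rw [r_mul_sr]; congr 1; ring

lemma top_of_sr_mem_of_rotExp_top {B : Subgroup (DihedralGroup n)} {j : ZMod n}
    (hj : sr j ∈ B) (h : rotExp B = ⊤) : B = ⊤ := by
  rw [eq_top_iff]
  rintro (x | x) -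
  · have : x ∈ rotExp B := h.symm ▸ AddSubgroup.mem_top x
    exact this
  · rw [sr_eq_r_mul_sr x j]
    have : (j - x) ∈ rotExp B := h.symm ▸ AddSubgroup.mem_top _
    exact B.mul_mem this hj

lemma rsub_top_ne_top : rsub (⊤ : AddSubgroup (ZMod n)) ≠ ⊤ := by
  intro h
  have : sr 0 ∈ rsub (⊤ : AddSubgroup (ZMod n)) := h.symm ▸ Subgroup.mem_top _
  exact sr_not_mem_rsub this

lemma isCoatom_rsub_top : IsCoatom (rsub (⊤ : AddSubgroup (ZMod n))) := by
  refine ⟨rsub_top_ne_top, fun B hB => ?_⟩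
  obtain ⟨x, hxB, hx⟩ := SetLike.exists_of_lt hB
  cases x with
  | r i => exact absurd (r_mem_rsub.mpr (AddSubgroup.mem_top i)) hx
  | sr j =>
    apply top_of_sr_mem_of_rotExp_top hxB
    rw [eq_top_iff]
    intro i _
    exact hB.le (r_mem_rsub.mpr (AddSubgroup.mem_top i))

lemma dsub_eq_top_iff {A : AddSubgroup (ZMod n)} {j : ZMod n} :
    dsub A j = ⊤ ↔ A = ⊤ := by
  constructor
  · intro h
    rw [eq_top_iff]
    intro i _
    have hm : r i ∈ dsub A j := h.symm ▸ Subgroup.mem_top _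
    exact r_mem_dsub.mp hm
  · rintro rfl
    rw [eq_top_iff]
    rintro (x | x) - <;> simp

lemma isCoatom_dsub {A : AddSubgroup (ZMod n)} (hA : IsCoatom A) (j : ZMod n) :
    IsCoatom (dsub A j) := by
  refine ⟨fun h => hA.1 (dsub_eq_top_iff.mp h), fun B hB => ?_⟩
  have hj : sr j ∈ B := hB.le (sr_mem_dsub.mpr (by simpa using A.zero_mem))
  have hle : A ≤ rotExp B := fun i hi => hB.le (r_mem_dsub.mpr hi)
  obtain ⟨x, hxB, hx⟩ := SetLike.exists_of_lt hB
  have hwit : ∃ i, i ∈ rotExp B ∧ i ∉ A := by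
    cases x with
    | r i => exact ⟨i, hxB, fun h => hx (r_mem_dsub.mpr h)⟩
    | sr k =>
      refine ⟨j - k, ?_, ?_⟩
      · show r (j - k) ∈ B
        have : r (j - k) = sr k * sr j := by rw [sr_mul_sr]
        rw [this]; exact B.mul_mem hxB hj
      · intro h
        exact hx (sr_mem_dsub.mpr (by simpa using A.neg_mem h))
  obtain ⟨i, hiB, hiA⟩ := hwit
  have hlt : A < rotExp B := lt_of_le_of_ne hle (fun h => hiA (h ▸ hiB))
  exact top_of_sr_mem_of_rotExp_top hj (hA.2 _ hlt)

lemma coatom_cases {M : Subgroup (DihedralGroup n)} (hM : IsCoatom M) :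
    M = rsub ⊤ ∨ ∃ (A : AddSubgroup (ZMod n)) (j : ZMod n),
      IsCoatom A ∧ M = dsub A j := by
  by_cases hrefl : ∃ j, sr j ∈ M
  · right
    obtain ⟨j, hj⟩ := hrefl
    have hMd : M = dsub (rotExp M) j := by
      ext x
      cases x with
      | r i => rfl
      | sr k =>
        rw [sr_mem_dsub]
        constructor
        · intro hk
          show r (k - j) ∈ M
          have : r (k - j) = sr j * sr k := by rw [sr_mul_sr]
          rw [this]; exact M.mul_mem hj hk
        · intro hk
          rw [sr_eq_r_mul_sr k j]
          have : (j - k) ∈ rotExp M := by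
            have := (rotExp M).neg_mem hk
            simpa using this
          exact M.mul_mem this hj
    refine ⟨rotExp M, j, ⟨?_, ?_⟩, hMd⟩
    · intro h
      exact hM.1 (by rw [hMd, dsub_eq_top_iff]; exact h)
    · intro B hB
      have hlt : M < dsub B j := by
        rw [hMd]
        obtain ⟨b, hbB, hbA⟩ := SetLike.exists_of_lt hB
        refine lt_of_le_of_ne ?_ ?_
        · rintro (x | x) hx
          · exact r_mem_dsub.mpr (hB.le (r_mem_dsub.mp hx))
          · exact sr_mem_dsub.mpr (hB.le (sr_mem_dsub.mp hx))
        · intro h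
          exact hbA (r_mem_dsub.mp (h ▸ (r_mem_dsub.mpr hbB : r b ∈ dsub B j)))
      rw [← dsub_eq_top_iff (j := j)]
      exact hM.2 _ hlt
  · left
    have hle : M ≤ rsub ⊤ := by
      rintro (x | x) hx
      · exact r_mem_rsub.mpr (AddSubgroup.mem_top x)
      · exact absurd ⟨x, hx⟩ hrefl
    rcases eq_or_lt_of_le hle with h | h
    · exact h
    · exact absurd (hM.2 _ h) rsub_top_ne_top

lemma mem_finset_inf {G : Type*} [Group G] {s : Finset (Subgroup G)} {x : G} :
    x ∈ s.inf id ↔ ∀ M ∈ s, x ∈ M := by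
  classical
  induction s using Finset.induction_on with
  | empty => simp
  | insert _ _ h ih => simp [Finset.inf_insert, Subgroup.mem_inf, ih]

lemma frattini_dihedral [NeZero n] (hn : 2 ≤ n) :
    frattini (DihedralGroup n) =
      rsub (zmultiples (((∏ p ∈ n.primeFactors, p : ℕ) : ZMod n))) := by
  have hradn : (∏ p ∈ n.primeFactors, p) ∣ n := Nat.prod_primeFactors_dvd n
  apply le_antisymm
  · intro x hx
    have hx1 : x ∈ rsub (⊤ : AddSubgroup (ZMod n)) :=
      frattini_le_coatom isCoatom_rsub_top hx
    cases x with
    | sr k => exact absurd hx1 sr_not_mem_rsub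
    | r i =>
      refine r_mem_rsub.mpr ?_
      rw [mem_zmul_natCast hradn]
      refine Finset.prod_primes_dvd _
        (fun p hp => (Nat.prime_of_mem_primeFactors hp).prime) (fun p hp => ?_)
      have hpn : p ∣ n := Nat.dvd_of_mem_primeFactors hp
      have hx2 : r i ∈ dsub (zmultiples ((p : ZMod n))) 0 :=
        frattini_le_coatom
          (isCoatom_dsub (isCoatom_zmul hn (Nat.prime_of_mem_primeFactors hp) hpn) 0) hx
      exact (mem_zmul_natCast hpn).mp (r_mem_dsub.mp hx2)
  · rw [frattini, Order.radical]
    refine le_iInf₂ fun M hM => ?_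
    rcases coatom_cases hM with rfl | ⟨A, j, hA, rfl⟩
    · rintro (x | x) hx
      · exact r_mem_rsub.mpr (AddSubgroup.mem_top x)
      · exact absurd hx sr_not_mem_rsub
    · obtain ⟨p, hp, hpn, rfl⟩ := (isCoatom_addsubgroup_iff hn A).mp hA
      rintro (x | x) hx
      · refine r_mem_dsub.mpr ?_
        rw [mem_zmul_natCast hpn]
        have h1 := (mem_zmul_natCast hradn).mp (r_mem_rsub.mp hx)
        exact dvd_trans
          (Finset.dvd_prod_of_mem _ (Nat.mem_primeFactors.mpr ⟨hp, hpn, NeZero.ne n⟩)) h1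
      · exact absurd hx sr_not_mem_rsub

lemma rad_div_eq (hq : q ∈ n.primeFactors) :
    (∏ p ∈ n.primeFactors, p) / q = ∏ p ∈ n.primeFactors.erase q, p := by
  have h := Finset.prod_erase_mul n.primeFactors (fun p => p) hq
  exact Nat.div_eq_of_eq_mul_left (Nat.prime_of_mem_primeFactors hq).pos h.symm

lemma not_dvd_prod_erase (hq : q ∈ n.primeFactors) :
    ¬ q ∣ ∏ p ∈ n.primeFactors.erase q, p := by
  intro hdvd
  obtain ⟨a, ha, hqa⟩ := ((Nat.prime_of_mem_primeFactors hq).prime.dvd_finset_prod_iff _).mp hdvd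
  have := (Nat.prime_dvd_prime_iff_eq (Nat.prime_of_mem_primeFactors hq)
    (Nat.prime_of_mem_primeFactors (Finset.mem_of_mem_erase ha))).mp hqa
  exact (Finset.ne_of_mem_erase ha) this.symm

lemma dsub_inj [NeZero n] {p q : ℕ} (hp : p ∈ n.primeFactors) (hq : q ∈ n.primeFactors)
    {jp jq : ZMod n}
    (h : dsub (zmultiples ((p : ZMod n))) jp = dsub (zmultiples ((q : ZMod n))) jq) :
    p = q := by
  by_contra hne
  set rad := ∏ p ∈ n.primeFactors, p with hraddef
  have hradn : rad ∣ n := Nat.prod_primeFactors_dvd n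
  have hrad_pos : 0 < rad :=
    Finset.prod_pos fun p hp => (Nat.prime_of_mem_primeFactors hp).pos
  have hqlt : 1 < q := (Nat.prime_of_mem_primeFactors hq).one_lt
  have hm_lt : rad / q < n :=
    lt_of_lt_of_le (Nat.div_lt_self hrad_pos hqlt) (Nat.le_of_dvd (Nat.pos_of_ne_zero (NeZero.ne n)) hradn)
  have hmem : r (((rad / q : ℕ) : ZMod n)) ∈ dsub (zmultiples ((p : ZMod n))) jp := by
    refine r_mem_dsub.mpr ?_
    rw [mem_zmul_natCast (Nat.dvd_of_mem_primeFactors hp), ZMod.val_natCast_of_lt hm_lt,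
      rad_div_eq hq]
    exact Finset.dvd_prod_of_mem _ (Finset.mem_erase.mpr ⟨hne, hp⟩)
  rw [h] at hmem
  have := (mem_zmul_natCast (Nat.dvd_of_mem_primeFactors hq)).mp (r_mem_dsub.mp hmem)
  rw [ZMod.val_natCast_of_lt hm_lt, rad_div_eq hq] at this
  exact not_dvd_prod_erase hq this

lemma crt : ∀ (s : Finset ℕ), (∀ p ∈ s, p.Prime) → ∀ f : ℕ → ℤ,
    ∃ x : ℤ, ∀ p ∈ s, (p : ℤ) ∣ x - f p := by
  intro s
  classical
  induction s using Finset.induction_on with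
  | empty => exact fun _ f => ⟨0, fun p hp => absurd hp (Finset.notMem_empty p)⟩
  | @insert q t hqt ih =>
    intro hs f
    obtain ⟨x, hx⟩ := ih (fun p hp => hs p (Finset.mem_insert_of_mem hp)) f
    set P : ℤ := ∏ p ∈ t, (p : ℤ) with hP
    have hco : IsCoprime (q : ℤ) P := by
      apply IsCoprime.prod_right
      intro p hp
      have hqp : q ≠ p := by rintro rfl; exact hqt hp
      rw [Int.isCoprime_iff_gcd_eq_one, Int.gcd_natCast_natCast]
      exact (Nat.coprime_primes (hs q (Finset.mem_insert_self q t))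
        (hs p (Finset.mem_insert_of_mem hp))).mpr hqp
    obtain ⟨a, b, hab⟩ := hco
    refine ⟨f q * b * P + x * a * q, fun p hp => ?_⟩
    rcases Finset.mem_insert.mp hp with rfl | hp
    · have h1 : f p * b * P + x * a * p - f p = (x - f p) * a * p := by
        linear_combination f p * hab
      rw [h1]
      exact Dvd.intro_left _ rfl
    · have h1 : (p : ℤ) ∣ (f q * b * P + x * a * q) - x := by
        have h2 : f q * b * P + x * a * q - x = (f q * b - x * b) * P := by
          linear_combination x * hab
        rw [h2]
        exact Dvd.dvd.mul_left (Finset.dvd_prod_of_mem _ hp) _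
      have h3 := hx p hp
      have h4 := dvd_add h1 h3
      rwa [sub_add_sub_cancel] at h4

lemma lower_bound [NeZero n] (hn : 2 ≤ n) {s : Finset (Subgroup (DihedralGroup n))}
    (hco : ∀ M ∈ s, IsCoatom M) (hinf : s.inf id = frattini (DihedralGroup n)) :
    n.primeFactors.card + 1 ≤ s.card := by
  classical
  set rad := ∏ p ∈ n.primeFactors, p with hraddef
  have hradn : rad ∣ n := Nat.prod_primeFactors_dvd n
  have hrad_pos : 0 < rad :=
    Finset.prod_pos fun p hp => (Nat.prime_of_mem_primeFactors hp).pos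
  have hnpos : 0 < n := Nat.pos_of_ne_zero (NeZero.ne n)
  -- Step A: each prime factor is covered
  have hA : ∀ p ∈ n.primeFactors, ∃ M ∈ s, ∃ j : ZMod n,
      M = dsub (zmultiples ((p : ZMod n))) j := by
    intro p hp
    by_contra hcon
    push_neg at hcon
    have hplt : 1 < p := (Nat.prime_of_mem_primeFactors hp).one_lt
    have hm_lt_rad : rad / p < rad := Nat.div_lt_self hrad_pos hplt
    have hm_lt : rad / p < n := lt_of_lt_of_le hm_lt_rad (Nat.le_of_dvd hnpos hradn)
    have hmem : r (((rad / p : ℕ) : ZMod n)) ∈ s.inf id := by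
      rw [mem_finset_inf]
      intro M hM
      rcases coatom_cases (hco M hM) with rfl | ⟨A, j, hAc, rfl⟩
      · exact r_mem_rsub.mpr (AddSubgroup.mem_top _)
      · obtain ⟨q, hqpr, hqn, rfl⟩ := (isCoatom_addsubgroup_iff hn A).mp hAc
        have hq : q ∈ n.primeFactors := Nat.mem_primeFactors.mpr ⟨hqpr, hqn, NeZero.ne n⟩
        have hqp : q ≠ p := by
          rintro rfl
          exact hcon _ hM j rfl
        refine r_mem_dsub.mpr ?_
        rw [mem_zmul_natCast hqn, ZMod.val_natCast_of_lt hm_lt, rad_div_eq hp]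
        exact Finset.dvd_prod_of_mem _ (Finset.mem_erase.mpr ⟨hqp, hq⟩)
    rw [hinf, frattini_dihedral hn] at hmem
    have hdvd := (mem_zmul_natCast hradn).mp (r_mem_rsub.mp hmem)
    rw [ZMod.val_natCast_of_lt hm_lt] at hdvd
    have hmpos : 0 < rad / p := Nat.div_pos (Nat.le_of_dvd hrad_pos
      (Finset.dvd_prod_of_mem _ hp)) (lt_trans Nat.zero_lt_one hplt)
    exact absurd (Nat.le_of_dvd hmpos hdvd) (not_le.mpr hm_lt_rad)
  -- choice of covering subgroups
  have hchoice : ∀ p : ℕ, ∃ Mj : Subgroup (DihedralGroup n) × ZMod n,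
      p ∈ n.primeFactors →
        Mj.1 ∈ s ∧ Mj.1 = dsub (zmultiples ((p : ZMod n))) Mj.2 := by
    intro p
    by_cases hp : p ∈ n.primeFactors
    · obtain ⟨M, hMs, j, hMj⟩ := hA p hp
      exact ⟨(M, j), fun _ => ⟨hMs, hMj⟩⟩
    · exact ⟨(⊥, 0), fun h => absurd h hp⟩
  choose F hF using hchoice
  have hinj : Set.InjOn (fun p => (F p).1) n.primeFactors := by
    intro p hp q hq hpq
    have h1 := (hF p hp).2
    have h2 := (hF q hq).2
    simp only at hpq
    rw [h1, h2] at hpq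
    exact dsub_inj hp hq hpq
  have hmaps : ∀ p ∈ n.primeFactors, (F p).1 ∈ s := fun p hp => (hF p hp).1
  have hk_le : n.primeFactors.card ≤ s.card :=
    Finset.card_le_card_of_injOn _ hmaps hinj
  by_contra hlt
  push_neg at hlt
  have hcard_eq : s.card = n.primeFactors.card := le_antisymm (by omega) hk_le
  have himg : n.primeFactors.image (fun p => (F p).1) = s := by
    apply Finset.eq_of_subset_of_card_le
    · intro M hM
      obtain ⟨p, hp, rfl⟩ := Finset.mem_image.mp hM
      exact hmaps p hp
    · rw [Finset.card_image_of_injOn hinj, hcard_eq]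
  -- CRT reflection
  obtain ⟨x, hx⟩ := crt n.primeFactors
    (fun p hp => Nat.prime_of_mem_primeFactors hp) (fun p => ((F p).2.val : ℤ))
  have hsr : sr ((x : ℤ) : ZMod n) ∈ s.inf id := by
    rw [mem_finset_inf]
    intro M hM
    rw [← himg] at hM
    obtain ⟨p, hp, rfl⟩ := Finset.mem_image.mp hM
    rw [(hF p hp).2]
    refine sr_mem_dsub.mpr ?_
    rw [mem_zmul_iff]
    obtain ⟨c, hc⟩ := hx p hp
    have hval : (((F p).2.val : ℕ) : ZMod n) = (F p).2 := ZMod.natCast_rightInverse _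
    have hcast : ((x : ℤ) : ZMod n) - (F p).2 = (((x - ((F p).2.val : ℤ)) : ℤ) : ZMod n) := by
      push_cast
      rw [hval]
    rw [hcast, hc]
    push_cast
    exact dvd_mul_right _ _
  rw [hinf, frattini_dihedral hn] at hsr
  exact absurd hsr sr_not_mem_rsub

lemma upper_bound [NeZero n] (hn : 2 ≤ n) :
    ∃ s : Finset (Subgroup (DihedralGroup n)), s.card = n.primeFactors.card + 1 ∧
      (∀ M ∈ s, IsCoatom M) ∧ s.inf id = frattini (DihedralGroup n) := by
  classical
  set img := n.primeFactors.image
    (fun p : ℕ => dsub (zmultiples ((p : ZMod n))) (0 : ZMod n)) with himgdef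
  have hinjOn : Set.InjOn (fun p : ℕ => dsub (zmultiples ((p : ZMod n))) (0 : ZMod n))
      (n.primeFactors : Set ℕ) := fun p hp q hq h => dsub_inj hp hq h
  have hnotmem : rsub (⊤ : AddSubgroup (ZMod n)) ∉ img := by
    intro h
    obtain ⟨p, hp, heq⟩ := Finset.mem_image.mp h
    have hsr : sr 0 ∈ dsub (zmultiples ((p : ZMod n))) 0 :=
      sr_mem_dsub.mpr (by simpa using (zmultiples ((p : ZMod n))).zero_mem)
    rw [heq] at hsr
    exact sr_not_mem_rsub hsr
  refine ⟨insert (rsub ⊤) img, ?_, ?_, ?_⟩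
  · rw [Finset.card_insert_of_notMem hnotmem, himgdef,
      Finset.card_image_of_injOn hinjOn]
  · intro M hM
    rcases Finset.mem_insert.mp hM with rfl | hM
    · exact isCoatom_rsub_top
    · obtain ⟨p, hp, rfl⟩ := Finset.mem_image.mp hM
      exact isCoatom_dsub (isCoatom_zmul hn (Nat.prime_of_mem_primeFactors hp)
        (Nat.dvd_of_mem_primeFactors hp)) 0
  · rw [frattini_dihedral hn]
    have hradn := Nat.prod_primeFactors_dvd n
    ext x
    rw [mem_finset_inf]
    constructor
    · intro h
      have hr := h _ (Finset.mem_insert_self _ _)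
      cases x with
      | sr k => exact absurd hr sr_not_mem_rsub
      | r i =>
        refine r_mem_rsub.mpr ?_
        rw [mem_zmul_natCast hradn]
        refine Finset.prod_primes_dvd _
          (fun p hp => (Nat.prime_of_mem_primeFactors hp).prime) (fun p hp => ?_)
        have h2 := h _ (Finset.mem_insert_of_mem (by
          rw [himgdef]; exact Finset.mem_image_of_mem _ hp))
        exact (mem_zmul_natCast (Nat.dvd_of_mem_primeFactors hp)).mp (r_mem_dsub.mp h2)
    · intro hx M hM
      cases x with
      | sr k => exact absurd hx sr_not_mem_rsub
      | r i =>
        have hi := (mem_zmul_natCast hradn).mp (r_mem_rsub.mp hx)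
        rcases Finset.mem_insert.mp hM with rfl | hM
        · exact r_mem_rsub.mpr (AddSubgroup.mem_top i)
        · obtain ⟨p, hp, rfl⟩ := Finset.mem_image.mp hM
          refine r_mem_dsub.mpr ?_
          rw [mem_zmul_natCast (Nat.dvd_of_mem_primeFactors hp)]
          exact dvd_trans (Finset.dvd_prod_of_mem _ hp) hi

end InterNumDihedralAux

open InterNumDihedralAux in
lemma interNum_dihedral_aux (n : ℕ) (hn : 3 ≤ n) :
    interNum (DihedralGroup n) = n.primeFactors.card + 1 := by
  haveI : NeZero n := ⟨by omega⟩
  have hn2 : 2 ≤ n := by omega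
  obtain ⟨s, hcard, hcoat, hinf⟩ := upper_bound hn2
  apply le_antisymm
  · exact Nat.sInf_le ⟨s, hcard, hcoat, hinf⟩
  · refine le_csInf ⟨_, s, hcard, hcoat, hinf⟩ ?_
    rintro m ⟨t, rfl, hco, hi⟩
    exact lower_bound hn2 hco hi

theorem interNum_dihedral (n : ℕ) (hn : 3 ≤ n) :
    (¬ (∃ m, n = 2 ^ m) → interNum (DihedralGroup n) = n.primeFactors.card + 1) ∧
    ((∃ m, n = 2 ^ m) → interNum (DihedralGroup n) = 2) := by
  constructor
  · intro _
    exact interNum_dihedral_aux n hn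
  · rintro ⟨m, rfl⟩
    rw [interNum_dihedral_aux _ hn]
    have hm : m ≠ 0 := by
      rintro rfl
      omega
    rw [Nat.primeFactors_prime_pow hm Nat.prime_two]
    simp
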